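/- The lattice D4 ⊕ A2 ⊕ A2 cannot be embedded in the odd unimodular lattice I_{1,8}; that is, there is no 9 × 8 integer matrix M such that Mᵀ · G(I_{1,8}) · M equals the Gram matrix of D4 ⊕ 2A2. -/

import Mathlib

open Matrix

/-- Gram matrix of the ambient lattice (9 × 9). -/
def ambientGram : Matrix (Fin 9) (Fin 9) ℤ :=
  !![1, 0, 0, 0, 0, 0, 0, 0, 0;
      0, -1, 0, 0, 0, 0, 0, 0, 0;
      0, 0, -1, 0, 0, 0, 0, 0, 0;
      0, 0, 0, -1, 0, 0, 0, 0, 0;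
      0, 0, 0, 0, -1, 0, 0, 0, 0;
      0, 0, 0, 0, 0, -1, 0, 0, 0;
      0, 0, 0, 0, 0, 0, -1, 0, 0;
      0, 0, 0, 0, 0, 0, 0, -1, 0;
      0, 0, 0, 0, 0, 0, 0, 0, -1]

/-- Gram matrix of the root lattice to be embedded (8 × 8). -/
def rootGram : Matrix (Fin 8) (Fin 8) ℤ :=
  !![-2, 1, 0, 0, 0, 0, 0, 0;
      1, -2, 1, 1, 0, 0, 0, 0;
      0, 1, -2, 0, 0, 0, 0, 0;
      0, 1, 0, -2, 0, 0, 0, 0;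
      0, 0, 0, 0, -2, 1, 0, 0;
      0, 0, 0, 0, 1, -2, 0, 0;
      0, 0, 0, 0, 0, 0, -2, 1;
      0, 0, 0, 0, 0, 0, 1, -2]

/-! ### Auxiliary definitions for the proof -/

/-- The reduction ring hom `ℤ → ℤ/3`. -/
def f3 : ℤ →+* ZMod 3 := Int.castRingHom (ZMod 3)

/-- `ambientGram` mod 3. -/
def GbE : Matrix (Fin 9) (Fin 9) (ZMod 3) :=
  !![1,0,0,0,0,0,0,0,0; 0,2,0,0,0,0,0,0,0; 0,0,2,0,0,0,0,0,0; 0,0,0,2,0,0,0,0,0;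
     0,0,0,0,2,0,0,0,0; 0,0,0,0,0,2,0,0,0; 0,0,0,0,0,0,2,0,0; 0,0,0,0,0,0,0,2,0;
     0,0,0,0,0,0,0,0,2]

/-- `rootGram` mod 3. -/
def RbE : Matrix (Fin 8) (Fin 8) (ZMod 3) :=
  !![1,1,0,0,0,0,0,0; 1,1,1,1,0,0,0,0; 0,1,1,0,0,0,0,0; 0,1,0,1,0,0,0,0;
     0,0,0,0,1,1,0,0; 0,0,0,0,1,1,0,0; 0,0,0,0,0,0,1,1; 0,0,0,0,0,0,1,1]

/-- A mod-3 kernel vector of `rootGram` supported on the first `A₂` block. -/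
def ub : Fin 8 → ZMod 3 := ![0,0,0,0,1,2,0,0]

/-- A mod-3 kernel vector of `rootGram` supported on the second `A₂` block. -/
def vb : Fin 8 → ZMod 3 := ![0,0,0,0,0,0,1,2]

lemma hGbE : ambientGram.map f3 = GbE := by decide
lemma hRbE : rootGram.map f3 = RbE := by decide
lemma hGG : GbE * GbE = 1 := by decide
lemma hRu : RbE *ᵥ ub = 0 := by decide
lemma hRv : RbE *ᵥ vb = 0 := by decide
lemma h3Z : (3 : ZMod 3) = 0 := by decide

lemma sq3 : ∀ a b : ZMod 3, a ^ 2 + b ^ 2 = 0 → a = 0 ∧ b = 0 := by decide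

lemma ub4 : ub 4 = 1 := by decide
lemma ub6 : ub 6 = 0 := by decide
lemma vb4 : vb 4 = 0 := by decide
lemma vb6 : vb 6 = 1 := by decide

/-- Structure of the mod 3 kernel of `rootGram`. -/
lemma kerRbE (c : Fin 8 → ZMod 3) (hc : RbE *ᵥ c = 0) :
    c 0 = 0 ∧ c 1 = 0 ∧ c 2 = 0 ∧ c 3 = 0 ∧ c 5 = 2 * c 4 ∧ c 7 = 2 * c 6 := by
  have h3 : (3 : ZMod 3) = 0 := by decide
  have hceq : c = ![c 0, c 1, c 2, c 3, c 4, c 5, c 6, c 7] := by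
    funext j; fin_cases j <;> rfl
  rw [hceq] at hc
  simp only [RbE, Matrix.cons_mulVec, Matrix.cons_dotProduct, Matrix.empty_mulVec,
    Matrix.dotProduct_of_isEmpty, Matrix.of_apply, Matrix.head_cons, Matrix.tail_cons,
    zero_mul, one_mul, add_zero, zero_add, mul_zero] at hc
  have e0 := congrFun hc (0 : Fin 8)
  have e1 := congrFun hc ((0 : Fin 7).succ)
  have e2 := congrFun hc ((0 : Fin 6).succ.succ)
  have e3 := congrFun hc ((0 : Fin 5).succ.succ.succ)
  have e4 := congrFun hc ((0 : Fin 4).succ.succ.succ.succ)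
  have e6 := congrFun hc ((0 : Fin 2).succ.succ.succ.succ.succ.succ)
  simp only [Matrix.cons_val_succ, Matrix.cons_val_zero, Matrix.head_cons, Matrix.tail_cons,
    Pi.zero_apply] at e0 e1 e2 e3 e4 e6
  have h1 : c 1 = 0 := by linear_combination 2*e0 - 2*e1 + 2*e2 + 2*e3 - c 1 * h3
  exact ⟨by linear_combination e0 - h1, h1, by linear_combination e2 - h1,
    by linear_combination e3 - h1, by linear_combination e4 - c 4 * h3,
    by linear_combination e6 - c 6 * h3⟩

theorem stmt_13 :
    ¬ ∃ M : Matrix (Fin 9) (Fin 8) ℤ,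
      Mᵀ * ambientGram * M = rootGram := by
  rintro ⟨M, hM⟩
  set Mb : Matrix (Fin 9) (Fin 8) (ZMod 3) := M.map f3 with hMbdef
  have hcast : Mbᵀ * GbE * Mb = RbE := by
    rw [hMbdef, ← Matrix.transpose_map, ← hGbE, ← Matrix.map_mul, ← Matrix.map_mul, hM, hRbE]
  -- Step 1: the columns of `M` are linearly dependent mod 3.
  have hex : ∃ c : Fin 8 → ZMod 3, c ≠ 0 ∧ Mb *ᵥ c = 0 := by
    by_contra hno
    push_neg at hno
    haveI : Fact (Nat.Prime 3) := ⟨by norm_num⟩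
    have hinj : Function.Injective Mb.mulVecLin := by
      rw [← LinearMap.ker_eq_bot, Submodule.eq_bot_iff]
      intro x hx
      by_contra h0
      exact hno x h0 (by simpa [Matrix.mulVecLin_apply] using hx)
    set L : (Fin 9 → ZMod 3) →ₗ[ZMod 3] (Fin 8 → ZMod 3) := (Mbᵀ * GbE).mulVecLin with hL
    have hsurj : LinearMap.range GbE.mulVecLin = ⊤ := by
      rw [LinearMap.range_eq_top]
      intro x
      exact ⟨GbE *ᵥ x, by simp [Matrix.mulVecLin_apply, Matrix.mulVec_mulVec, hGG,
        Matrix.one_mulVec]⟩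
    have hrange : LinearMap.range L = LinearMap.range (Matrix.mulVecLin Mbᵀ) := by
      rw [hL, Matrix.mulVecLin_mul]
      exact LinearMap.range_comp_of_range_eq_top _ hsurj
    have hrankMb : Mb.rank = 8 := by
      show Module.finrank (ZMod 3) (LinearMap.range Mb.mulVecLin) = 8
      have h := Mb.mulVecLin.finrank_range_add_finrank_ker
      rw [LinearMap.ker_eq_bot.mpr hinj] at h
      simp only [finrank_bot, add_zero, Module.finrank_fin_fun] at h
      exact h
    have hrankT : Module.finrank (ZMod 3) (LinearMap.range (Matrix.mulVecLin Mbᵀ)) = 8 := by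
      have h1 : Mbᵀ.rank = Mb.rank := Matrix.rank_transpose Mb
      exact h1.trans hrankMb
    have hkerL : Module.finrank (ZMod 3) (LinearMap.ker L) = 1 := by
      have h := L.finrank_range_add_finrank_ker
      rw [hrange, hrankT] at h
      simp only [Module.finrank_fin_fun] at h
      omega
    have hub : Mb *ᵥ ub ∈ LinearMap.ker L := by
      rw [LinearMap.mem_ker, hL, Matrix.mulVecLin_apply, Matrix.mulVec_mulVec, hcast, hRu]
    have hvb : Mb *ᵥ vb ∈ LinearMap.ker L := by
      rw [LinearMap.mem_ker, hL, Matrix.mulVecLin_apply, Matrix.mulVec_mulVec, hcast, hRv]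
    have hpair : LinearIndependent (ZMod 3) ![Mb *ᵥ ub, Mb *ᵥ vb] := by
      rw [LinearIndependent.pair_iff]
      intro s t hst
      have h0 : Mb.mulVecLin (s • ub + t • vb) = Mb.mulVecLin 0 := by
        simp only [Matrix.mulVecLin_apply, Matrix.mulVec_add, Matrix.mulVec_smul,
          Matrix.mulVec_zero]
        exact hst
      have h1 := hinj h0
      constructor
      · have h4 := congrFun h1 4
        simpa [ub4, vb4] using h4
      · have h6 := congrFun h1 6
        simpa [ub6, vb6] using h6
    have hspanle : Submodule.span (ZMod 3) (Set.range ![Mb *ᵥ ub, Mb *ᵥ vb]) ≤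
        LinearMap.ker L := by
      rw [Submodule.span_le]
      rintro x ⟨i, rfl⟩
      fin_cases i
      · exact hub
      · exact hvb
    have h2 : Module.finrank (ZMod 3)
        (Submodule.span (ZMod 3) (Set.range ![Mb *ᵥ ub, Mb *ᵥ vb])) = 2 := by
      have h := finrank_span_eq_card hpair
      simpa using h
    have hle := Submodule.finrank_mono hspanle
    rw [h2, hkerL] at hle
    omega
  -- Step 2: produce an integral vector contradicting the quadratic form mod 9.
  obtain ⟨c, hc0, hMc⟩ := hex
  have hRc : RbE *ᵥ c = 0 := by
    rw [← hcast, ← Matrix.mulVec_mulVec, hMc, Matrix.mulVec_zero]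
  obtain ⟨hk0, hk1, hk2, hk3, hk5, hk7⟩ := kerRbE c hRc
  obtain ⟨A, hA⟩ := ZMod.intCast_surjective (c 4)
  obtain ⟨B, hB⟩ := ZMod.intCast_surjective (c 6)
  set Cz : Fin 8 → ℤ := ![0, 0, 0, 0, A, -A, B, -B] with hCzdef
  have hfC : ∀ j, f3 (Cz j) = c j := by
    intro j
    fin_cases j
    · show f3 0 = c 0; rw [hk0]; simp
    · show f3 0 = c 1; rw [hk1]; simp
    · show f3 0 = c 2; rw [hk2]; simp
    · show f3 0 = c 3; rw [hk3]; simp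
    · show f3 A = c 4; exact hA
    · show f3 (-A) = c 5
      rw [hk5, ← hA]
      show ((-A : ℤ) : ZMod 3) = 2 * ((A : ℤ) : ZMod 3)
      push_cast
      linear_combination (-(A : ZMod 3)) * h3Z
    · show f3 B = c 6; exact hB
    · show f3 (-B) = c 7
      rw [hk7, ← hB]
      show ((-B : ℤ) : ZMod 3) = 2 * ((B : ℤ) : ZMod 3)
      push_cast
      linear_combination (-(B : ZMod 3)) * h3Z
  have hdvd : ∀ i, (3 : ℤ) ∣ (M *ᵥ Cz) i := by
    intro i
    have h1 : f3 ((M *ᵥ Cz) i) = 0 := by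
      rw [RingHom.map_mulVec]
      have hfc : f3 ∘ Cz = c := funext hfC
      rw [hfc, ← hMbdef, hMc]
      simp
    exact (ZMod.intCast_zmod_eq_zero_iff_dvd _ 3).mp h1
  choose z hz using hdvd
  have hquad : Cz ⬝ᵥ (rootGram *ᵥ Cz) = (M *ᵥ Cz) ⬝ᵥ (ambientGram *ᵥ (M *ᵥ Cz)) := by
    conv_lhs => rw [← hM]
    rw [← Matrix.mulVec_mulVec, ← Matrix.mulVec_mulVec, Matrix.dotProduct_mulVec,
      Matrix.vecMul_transpose]
  have hnine : (9 : ℤ) ∣ Cz ⬝ᵥ (rootGram *ᵥ Cz) := by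
    rw [hquad]
    have hy : M *ᵥ Cz = (3 : ℤ) • z := by
      funext i; simpa [smul_eq_mul] using hz i
    rw [hy, Matrix.mulVec_smul, _root_.smul_dotProduct, _root_.dotProduct_smul]
    exact ⟨z ⬝ᵥ ambientGram *ᵥ z, by simp [smul_eq_mul]; ring⟩
  have hval : Cz ⬝ᵥ (rootGram *ᵥ Cz) = -6 * (A ^ 2 + B ^ 2) := by
    rw [hCzdef]
    simp only [rootGram, Matrix.cons_mulVec, Matrix.cons_dotProduct, Matrix.empty_mulVec,
      Matrix.dotProduct_of_isEmpty, Matrix.of_apply, Matrix.head_cons, Matrix.tail_cons]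
    ring
  rw [hval] at hnine
  obtain ⟨k, hk⟩ := hnine
  have h3AB : (3 : ℤ) ∣ A ^ 2 + B ^ 2 := ⟨A ^ 2 + B ^ 2 + k, by linarith⟩
  have hzz : ((A : ZMod 3)) ^ 2 + ((B : ZMod 3)) ^ 2 = 0 := by
    have h := (ZMod.intCast_zmod_eq_zero_iff_dvd (A ^ 2 + B ^ 2) 3).mpr h3AB
    push_cast at h
    exact h
  have hfin : (A : ZMod 3) = 0 ∧ (B : ZMod 3) = 0 := sq3 _ _ hzz
  apply hc0
  funext j
  fin_cases j
  · show c 0 = 0; exact hk0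
  · show c 1 = 0; exact hk1
  · show c 2 = 0; exact hk2
  · show c 3 = 0; exact hk3
  · show c 4 = 0; rw [← hA]; exact hfin.1
  · show c 5 = 0; rw [hk5, ← hA, hfin.1]; ring
  · show c 6 = 0; rw [← hB]; exact hfin.2
  · show c 7 = 0; rw [hk7, ← hB, hfin.2]; ring
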